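/- arXiv:2002.03820 — 3 statements merged into one kernel-verified Lean document; each statement's English description precedes it below -/
import Mathlib

section
/- Let A : ℂ^N → ℂ^m and E : ℂ^N → ℂ^M be linear maps between finite-dimensional complex inner product spaces, λ > 0, z ∈ ℂ^M, and for y ∈ ℂ^m define G_y(x) = (1/2)‖A x − y‖² + (λ/2)‖E x − z‖². Let y, y' ∈ ℂ^m, let x* be a global minimizer of G_y and x' a global minimizer of G_{y'}. Then G_y(x') ≤ 4 G_y(x*) + 3‖y − y'‖². -/
lemma sq_tri {V : Type*} [NormedAddCommGroup V] (a b c : V) :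
    ‖a - c‖ ^ 2 ≤ 2 * ‖a - b‖ ^ 2 + 2 * ‖b - c‖ ^ 2 := by
  have h : ‖a - c‖ ≤ ‖a - b‖ + ‖b - c‖ := norm_sub_le_norm_sub_add_norm_sub a b c
  nlinarith [norm_nonneg (a - c), sq_nonneg (‖a - b‖ - ‖b - c‖)]

/-- Quantitative stability bound: if `x*` minimizes `G_y` and `x'` minimizes `G_{y'}`,
then `G_y(x') ≤ 4 G_y(x*) + 3‖y − y'‖²`. -/
theorem stmt_10 (N m M : ℕ)
    (A : EuclideanSpace ℂ (Fin N) →ₗ[ℂ] EuclideanSpace ℂ (Fin m))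
    (E : EuclideanSpace ℂ (Fin N) →ₗ[ℂ] EuclideanSpace ℂ (Fin M))
    (lam : ℝ) (hlam : 0 < lam)
    (z : EuclideanSpace ℂ (Fin M))
    (G : EuclideanSpace ℂ (Fin m) → EuclideanSpace ℂ (Fin N) → ℝ)
    (hG : ∀ y x, G y x = (1 / 2) * ‖A x - y‖ ^ 2 + (lam / 2) * ‖E x - z‖ ^ 2)
    (y y' : EuclideanSpace ℂ (Fin m))
    (xstar x' : EuclideanSpace ℂ (Fin N))
    (hxstar : ∀ x, G y xstar ≤ G y x)
    (hx' : ∀ x, G y' x' ≤ G y' x) :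
    G y x' ≤ 4 * G y xstar + 3 * ‖y - y'‖ ^ 2 := by
  have h1 := sq_tri (A x') y' y
  have h2 := sq_tri (A xstar) y y'
  have hmin := hx' xstar
  have hE' : 0 ≤ ‖E x' - z‖ ^ 2 := sq_nonneg _
  have hEs : 0 ≤ ‖E xstar - z‖ ^ 2 := sq_nonneg _
  have hd : ‖y' - y‖ = ‖y - y'‖ := norm_sub_rev _ _
  rw [hG y x', hG y xstar]
  rw [hG y' x', hG y' xstar] at hmin
  rw [hd] at h1
  nlinarith [mul_nonneg hlam.le hEs, mul_nonneg hlam.le hE']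
end

section
/- Let A : ℂ^N → ℂ^m and E : ℂ^N → ℂ^M be linear maps between finite-dimensional complex inner product spaces with ker A ∩ ker E = {0}, λ > 0, z ∈ ℂ^M, and for y ∈ ℂ^m define G_y(x) = (1/2)‖A x − y‖² + (λ/2)‖E x − z‖². Let y ∈ ℂ^m, let (y_ℓ) be a sequence in ℂ^m converging to y, and for each ℓ let x_ℓ be a global minimizer of G_{y_ℓ}. Then the sequence (x_ℓ) is bounded; in particular it has a convergent subsequence. -/
open Filter

lemma aux_antilip {X Y : Type*} [NormedAddCommGroup X] [NormedSpace ℂ X]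
    [NormedAddCommGroup Y] [NormedSpace ℂ Y] [FiniteDimensional ℂ X]
    (F : X →ₗ[ℂ] Y) (hF : LinearMap.ker F = ⊥) :
    ∃ K : ℝ, 0 ≤ K ∧ ∀ x, ‖x‖ ≤ K * ‖F x‖ := by
  have hinj : Function.Injective F := LinearMap.ker_eq_bot.mp hF
  let e : X ≃ₗ[ℂ] LinearMap.range F := LinearEquiv.ofInjective F hinj
  let e' := e.toContinuousLinearEquiv
  refine ⟨‖(e'.symm : LinearMap.range F →L[ℂ] X)‖, ContinuousLinearMap.opNorm_nonneg _, fun x => ?_⟩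
  have h1 : ‖x‖ = ‖e'.symm (e' x)‖ := by simp
  rw [h1]
  calc ‖e'.symm (e' x)‖ ≤ ‖(e'.symm : LinearMap.range F →L[ℂ] X)‖ * ‖e' x‖ :=
        (e'.symm : LinearMap.range F →L[ℂ] X).le_opNorm _
    _ = ‖(e'.symm : LinearMap.range F →L[ℂ] X)‖ * ‖F x‖ := rfl

/-- If `ker A ⊓ ker E = ⊥` and `y_ℓ → y`, then any sequence of global minimizers
`x_ℓ` of `G_{y_ℓ}` is bounded; in particular it has a convergent subsequence. -/
theorem stmt_11 (N m M : ℕ)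
    (A : EuclideanSpace ℂ (Fin N) →ₗ[ℂ] EuclideanSpace ℂ (Fin m))
    (E : EuclideanSpace ℂ (Fin N) →ₗ[ℂ] EuclideanSpace ℂ (Fin M))
    (hker : LinearMap.ker A ⊓ LinearMap.ker E = ⊥)
    (lam : ℝ) (hlam : 0 < lam)
    (z : EuclideanSpace ℂ (Fin M))
    (G : EuclideanSpace ℂ (Fin m) → EuclideanSpace ℂ (Fin N) → ℝ)
    (hG : ∀ y x, G y x = (1 / 2) * ‖A x - y‖ ^ 2 + (lam / 2) * ‖E x - z‖ ^ 2)
    (y : EuclideanSpace ℂ (Fin m)) (ys : ℕ → EuclideanSpace ℂ (Fin m))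
    (hys : Filter.Tendsto ys Filter.atTop (nhds y))
    (xs : ℕ → EuclideanSpace ℂ (Fin N))
    (hxs : ∀ ℓ, ∀ x, G (ys ℓ) (xs ℓ) ≤ G (ys ℓ) x) :
    (∃ C : ℝ, ∀ ℓ, ‖xs ℓ‖ ≤ C) ∧
      ∃ (τ : ℕ → ℕ) (xhat : EuclideanSpace ℂ (Fin N)), StrictMono τ ∧
        Filter.Tendsto (xs ∘ τ) Filter.atTop (nhds xhat) := by
  -- injectivity bound for the stacked map
  set F := A.prod E with hFdef
  have hFker : LinearMap.ker F = ⊥ := by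
    rw [hFdef, LinearMap.ker_prod, hker]
  obtain ⟨K, hK0, hK⟩ := aux_antilip F hFker
  -- bound on the data sequence
  have hbdd : BddAbove (Set.range fun ℓ => ‖ys ℓ‖) :=
    (hys.norm).bddAbove_range
  obtain ⟨B, hB⟩ := hbdd
  have hB' : ∀ ℓ, ‖ys ℓ‖ ≤ B := fun ℓ => hB ⟨ℓ, rfl⟩
  have hB0 : 0 ≤ B := le_trans (norm_nonneg _) (hB' 0)
  obtain ⟨D, hDdef⟩ : ∃ D : ℝ, D = (1 / 2) * B ^ 2 + (lam / 2) * ‖z‖ ^ 2 := ⟨_, rfl⟩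
  have hD0 : 0 ≤ D := by rw [hDdef]; positivity
  have key : ∀ ℓ, G (ys ℓ) (xs ℓ) ≤ D := by
    intro ℓ
    refine le_trans (hxs ℓ 0) ?_
    rw [hG]
    have h1 : ‖A 0 - ys ℓ‖ = ‖ys ℓ‖ := by rw [map_zero, zero_sub, norm_neg]
    have h2 : ‖E 0 - z‖ = ‖z‖ := by rw [map_zero, zero_sub, norm_neg]
    rw [h1, h2, hDdef]
    have := sq_le_sq' (by linarith [norm_nonneg (ys ℓ)]) (hB' ℓ)
    nlinarith
  -- bounds on the two residuals
  have hA : ∀ ℓ, ‖A (xs ℓ)‖ ≤ Real.sqrt (2 * D) + B := by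
    intro ℓ
    have h := key ℓ
    rw [hG] at h
    have hnn : 0 ≤ lam / 2 * ‖E (xs ℓ) - z‖ ^ 2 := mul_nonneg (by linarith) (sq_nonneg _)
    have h2 : ‖A (xs ℓ) - ys ℓ‖ ^ 2 ≤ 2 * D := by linarith
    have h3 : ‖A (xs ℓ) - ys ℓ‖ ≤ Real.sqrt (2 * D) :=
      (Real.le_sqrt (norm_nonneg _) (by positivity)).mpr h2
    calc ‖A (xs ℓ)‖ = ‖(A (xs ℓ) - ys ℓ) + ys ℓ‖ := by rw [sub_add_cancel]
      _ ≤ ‖A (xs ℓ) - ys ℓ‖ + ‖ys ℓ‖ := norm_add_le _ _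
      _ ≤ Real.sqrt (2 * D) + B := add_le_add h3 (hB' ℓ)
  have hE : ∀ ℓ, ‖E (xs ℓ)‖ ≤ Real.sqrt (2 * D / lam) + ‖z‖ := by
    intro ℓ
    have h := key ℓ
    rw [hG] at h
    have h2 : ‖E (xs ℓ) - z‖ ^ 2 ≤ 2 * D / lam := by
      rw [le_div_iff₀ hlam]
      have hnn : 0 ≤ 1 / 2 * ‖A (xs ℓ) - ys ℓ‖ ^ 2 := mul_nonneg (by norm_num) (sq_nonneg _)
      linarith
    have h3 : ‖E (xs ℓ) - z‖ ≤ Real.sqrt (2 * D / lam) :=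
      (Real.le_sqrt (norm_nonneg _) (div_nonneg (by linarith) hlam.le)).mpr h2
    calc ‖E (xs ℓ)‖ = ‖(E (xs ℓ) - z) + z‖ := by rw [sub_add_cancel]
      _ ≤ ‖E (xs ℓ) - z‖ + ‖z‖ := norm_add_le _ _
      _ ≤ Real.sqrt (2 * D / lam) + ‖z‖ := add_le_add h3 le_rfl
  obtain ⟨R, hRdef⟩ : ∃ R : ℝ, R = max (Real.sqrt (2 * D) + B) (Real.sqrt (2 * D / lam) + ‖z‖) := ⟨_, rfl⟩
  have hFbound : ∀ ℓ, ‖F (xs ℓ)‖ ≤ R := by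
    intro ℓ
    have : F (xs ℓ) = (A (xs ℓ), E (xs ℓ)) := rfl
    rw [this, Prod.norm_def, hRdef]
    exact max_le_max (hA ℓ) (hE ℓ)
  refine ⟨⟨K * R, fun ℓ => ?_⟩, ?_⟩
  · exact le_trans (hK _) (mul_le_mul_of_nonneg_left (hFbound ℓ) hK0)
  · have hC : ∀ ℓ, ‖xs ℓ‖ ≤ K * R := fun ℓ =>
      le_trans (hK _) (mul_le_mul_of_nonneg_left (hFbound ℓ) hK0)
    have hmem : ∀ ℓ, xs ℓ ∈ Metric.closedBall (0 : EuclideanSpace ℂ (Fin N)) (K * R) := by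
      intro ℓ; rw [Metric.mem_closedBall, dist_zero_right]; exact hC ℓ
    obtain ⟨xhat, _, τ, hτ, htend⟩ :=
      tendsto_subseq_of_bounded Metric.isBounded_closedBall hmem
    exact ⟨τ, xhat, hτ, htend⟩
end

section
/- Let A : ℂ^N → ℂ^m and E : ℂ^N → ℂ^M be linear maps between finite-dimensional complex inner product spaces with ker A ∩ ker E = {0}, λ > 0, z ∈ ℂ^M, and for y ∈ ℂ^m define G_y(x) = (1/2)‖A x − y‖² + (λ/2)‖E x − z‖². Let y ∈ ℂ^m and let (y_ℓ) be a sequence in ℂ^m converging to y, and for each ℓ let x_ℓ be a global minimizer of G_{y_ℓ}. Then (x_ℓ) has at least one convergent subsequence, and every accumulation point of (x_ℓ) is a global minimizer of G_y; that is, the solution map y ↦ argmin G_y is stable. -/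
open Filter Topology Bornology

/-- Stability of the solution map `y ↦ argmin G_y`: if `ker A ⊓ ker E = ⊥` and
`y_ℓ → y`, then any sequence of minimizers `x_ℓ` of `G_{y_ℓ}` has a convergent
subsequence, and every accumulation point of `(x_ℓ)` is a global minimizer of `G_y`. -/
theorem stmt_13 (N m M : ℕ)
    (A : EuclideanSpace ℂ (Fin N) →ₗ[ℂ] EuclideanSpace ℂ (Fin m))
    (E : EuclideanSpace ℂ (Fin N) →ₗ[ℂ] EuclideanSpace ℂ (Fin M))
    (hker : LinearMap.ker A ⊓ LinearMap.ker E = ⊥)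
    (lam : ℝ) (hlam : 0 < lam)
    (z : EuclideanSpace ℂ (Fin M))
    (G : EuclideanSpace ℂ (Fin m) → EuclideanSpace ℂ (Fin N) → ℝ)
    (hG : ∀ y x, G y x = (1 / 2) * ‖A x - y‖ ^ 2 + (lam / 2) * ‖E x - z‖ ^ 2)
    (y : EuclideanSpace ℂ (Fin m)) (ys : ℕ → EuclideanSpace ℂ (Fin m))
    (hys : Filter.Tendsto ys Filter.atTop (nhds y))
    (xs : ℕ → EuclideanSpace ℂ (Fin N))
    (hxs : ∀ ℓ, ∀ x, G (ys ℓ) (xs ℓ) ≤ G (ys ℓ) x) :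
    (∃ (τ : ℕ → ℕ) (xhat : EuclideanSpace ℂ (Fin N)), StrictMono τ ∧
        Filter.Tendsto (xs ∘ τ) Filter.atTop (nhds xhat)) ∧
      ∀ (τ : ℕ → ℕ) (xhat : EuclideanSpace ℂ (Fin N)), StrictMono τ →
        Filter.Tendsto (xs ∘ τ) Filter.atTop (nhds xhat) →
        ∀ x, G y xhat ≤ G y x := by
  have hA : Continuous A := A.continuous_of_finiteDimensional
  have hE : Continuous E := E.continuous_of_finiteDimensional
  -- continuity of G along sequences
  have hGlim : ∀ (u : ℕ → EuclideanSpace ℂ (Fin N)) (v : ℕ → EuclideanSpace ℂ (Fin m))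
      (xl : EuclideanSpace ℂ (Fin N)) (yl : EuclideanSpace ℂ (Fin m)),
      Tendsto u atTop (𝓝 xl) → Tendsto v atTop (𝓝 yl) →
      Tendsto (fun ℓ => G (v ℓ) (u ℓ)) atTop (𝓝 (G yl xl)) := by
    intro u v xl yl hu hv
    simp only [hG]
    have h1 : Tendsto (fun ℓ => ‖A (u ℓ) - v ℓ‖) atTop (𝓝 ‖A xl - yl‖) :=
      (((hA.tendsto xl).comp hu).sub hv).norm
    have h2 : Tendsto (fun ℓ => ‖E (u ℓ) - z‖) atTop (𝓝 ‖E xl - z‖) :=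
      (((hE.tendsto xl).comp hu).sub tendsto_const_nhds).norm
    exact ((h1.pow 2).const_mul _).add ((h2.pow 2).const_mul _)
  -- every accumulation point is a minimizer
  have key : ∀ (τ : ℕ → ℕ) (xhat : EuclideanSpace ℂ (Fin N)), StrictMono τ →
      Tendsto (xs ∘ τ) atTop (𝓝 xhat) → ∀ x, G y xhat ≤ G y x := by
    intro τ xhat hτ hx x
    have hysτ : Tendsto (ys ∘ τ) atTop (𝓝 y) := hys.comp hτ.tendsto_atTop
    exact le_of_tendsto_of_tendsto'
      (hGlim (xs ∘ τ) (ys ∘ τ) xhat y hx hysτ)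
      (hGlim (fun _ => x) (ys ∘ τ) x y tendsto_const_nhds hysτ)
      (fun ℓ => hxs (τ ℓ) x)
  refine ⟨?_, key⟩
  -- boundedness of the sequence of minimizers
  obtain ⟨C, hC⟩ : ∃ C : ℝ, ∀ ℓ, ‖ys ℓ‖ ≤ C := by
    obtain ⟨C, hC⟩ := hys.norm.bddAbove_range
    exact ⟨C, fun ℓ => hC ⟨ℓ, rfl⟩⟩
  have hC0 : 0 ≤ C := le_trans (norm_nonneg _) (hC 0)
  obtain ⟨B, hB0, hbound⟩ : ∃ B : ℝ, 0 ≤ B ∧ ∀ ℓ, G (ys ℓ) (xs ℓ) ≤ B := by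
    refine ⟨(1 / 2) * C ^ 2 + (lam / 2) * ‖z‖ ^ 2, by positivity, fun ℓ => ?_⟩
    refine le_trans (hxs ℓ 0) ?_
    rw [hG]
    simp only [map_zero, zero_sub, norm_neg]
    gcongr
    exact hC ℓ
  have hAb : ∀ ℓ, ‖A (xs ℓ)‖ ≤ Real.sqrt (2 * B) + C := by
    intro ℓ
    have h1 : (1 / 2) * ‖A (xs ℓ) - ys ℓ‖ ^ 2 ≤ B := by
      have := hbound ℓ
      rw [hG] at this
      nlinarith [norm_nonneg (E (xs ℓ) - z), sq_nonneg ‖E (xs ℓ) - z‖,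
        mul_nonneg (le_of_lt (half_pos hlam)) (sq_nonneg ‖E (xs ℓ) - z‖)]
    have h2 : ‖A (xs ℓ) - ys ℓ‖ ≤ Real.sqrt (2 * B) := by
      rw [show (2 : ℝ) * B = 2 * B by ring]
      have : ‖A (xs ℓ) - ys ℓ‖ ^ 2 ≤ 2 * B := by linarith
      calc ‖A (xs ℓ) - ys ℓ‖ = Real.sqrt (‖A (xs ℓ) - ys ℓ‖ ^ 2) :=
            (Real.sqrt_sq (norm_nonneg _)).symm
        _ ≤ Real.sqrt (2 * B) := Real.sqrt_le_sqrt this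
    calc ‖A (xs ℓ)‖ = ‖(A (xs ℓ) - ys ℓ) + ys ℓ‖ := by rw [sub_add_cancel]
      _ ≤ ‖A (xs ℓ) - ys ℓ‖ + ‖ys ℓ‖ := norm_add_le _ _
      _ ≤ Real.sqrt (2 * B) + C := add_le_add h2 (hC ℓ)
  have hEb : ∀ ℓ, ‖E (xs ℓ)‖ ≤ Real.sqrt (2 * B / lam) + ‖z‖ := by
    intro ℓ
    have h1 : (lam / 2) * ‖E (xs ℓ) - z‖ ^ 2 ≤ B := by
      have := hbound ℓ
      rw [hG] at this
      nlinarith [sq_nonneg ‖A (xs ℓ) - ys ℓ‖]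
    have h2 : ‖E (xs ℓ) - z‖ ≤ Real.sqrt (2 * B / lam) := by
      have h3 : ‖E (xs ℓ) - z‖ ^ 2 ≤ 2 * B / lam := by
        rw [le_div_iff₀ hlam]; nlinarith
      calc ‖E (xs ℓ) - z‖ = Real.sqrt (‖E (xs ℓ) - z‖ ^ 2) :=
            (Real.sqrt_sq (norm_nonneg _)).symm
        _ ≤ Real.sqrt (2 * B / lam) := Real.sqrt_le_sqrt h3
    calc ‖E (xs ℓ)‖ = ‖(E (xs ℓ) - z) + z‖ := by rw [sub_add_cancel]
      _ ≤ ‖E (xs ℓ) - z‖ + ‖z‖ := norm_add_le _ _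
      _ ≤ Real.sqrt (2 * B / lam) + ‖z‖ := add_le_add h2 le_rfl
  -- antilipschitz bound from injectivity of (A, E)
  set T : EuclideanSpace ℂ (Fin N) →ₗ[ℂ]
      (EuclideanSpace ℂ (Fin m) × EuclideanSpace ℂ (Fin M)) := A.prod E with hT
  have hTker : LinearMap.ker T = ⊥ := by
    rw [hT, LinearMap.ker_prod, hker]
  obtain ⟨K, hK0, hK⟩ := T.exists_antilipschitzWith hTker
  set R1 : ℝ := Real.sqrt (2 * B) + C with hR1
  set R2 : ℝ := Real.sqrt (2 * B / lam) + ‖z‖ with hR2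
  set R : ℝ := (K : ℝ) * max R1 R2 with hRdef
  have hxb : ∀ ℓ, ‖xs ℓ‖ ≤ R := by
    intro ℓ
    have h1 : ‖xs ℓ‖ ≤ (K : ℝ) * ‖T (xs ℓ)‖ := by
      have := hK.le_mul_dist (xs ℓ) 0
      simpa [dist_eq_norm, map_zero] using this
    have h2 : ‖T (xs ℓ)‖ ≤ max R1 R2 := by
      have : ‖T (xs ℓ)‖ = max ‖A (xs ℓ)‖ ‖E (xs ℓ)‖ := by
        rw [hT]; rfl
      rw [this]
      exact max_le_max (hAb ℓ) (hEb ℓ)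
    calc ‖xs ℓ‖ ≤ (K : ℝ) * ‖T (xs ℓ)‖ := h1
      _ ≤ (K : ℝ) * max R1 R2 := by
          exact mul_le_mul_of_nonneg_left h2 K.coe_nonneg
  -- extract convergent subsequence
  have hmem : ∀ ℓ, xs ℓ ∈ Metric.closedBall (0 : EuclideanSpace ℂ (Fin N)) R := by
    intro ℓ; simpa [Metric.mem_closedBall, dist_eq_norm] using hxb ℓ
  obtain ⟨a, _, τ, hτ, hconv⟩ :=
    tendsto_subseq_of_bounded Metric.isBounded_closedBall hmem
  exact ⟨τ, a, hτ, hconv⟩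
end
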